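/- Let K be a nondegenerate triangle in ℝ² with vertices W₁, W₂, W₃ and interior angles θ₁, θ₂, θ₃. Then for every i, (G_K)_{ii} = ∫_K |φ_i(x)|² dx = (1/6)·cot θ_i + (3/4)·ρ_K²/|K|, and for every pair i ≠ j, with k the remaining index, (G_K)_{ij} = ∫_K φ_i(x)·φ_j(x) dx = (1/6)·cot θ_k − (3/4)·ρ_K²/|K|. -/

import Mathlib

open MeasureTheory Real RealInnerProductSpace

noncomputable section

local notation "E2" => EuclideanSpace ℝ (Fin 2)

def Tset : Set (ℝ × ℝ) := {p | 0 ≤ p.1 ∧ 0 ≤ p.2 ∧ p.1 + p.2 ≤ 1}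

def TE : Set (EuclideanSpace ℝ (Fin 2)) := {x | 0 ≤ x 0 ∧ 0 ≤ x 1 ∧ x 0 + x 1 ≤ 1}

lemma poly_int (a b k0 k1 k2 k3 : ℝ) :
    ∫ x in a..b, (k0 + k1*x + k2*x^2 + k3*x^3) =
      k0*(b-a) + k1*(b^2-a^2)/2 + k2*(b^3-a^3)/3 + k3*(b^4-a^4)/4 := by
  have h : ∀ x ∈ Set.uIcc a b,
      HasDerivAt (fun x => k0*x + (k1/2)*x^2 + (k2/3)*x^3 + (k3/4)*x^4)
        (k0 + k1*x + k2*x^2 + k3*x^3) x := by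
    intro x _
    have h1 : HasDerivAt (fun x : ℝ => x) 1 x := hasDerivAt_id x
    have h2 := hasDerivAt_pow 2 x
    have h3 := hasDerivAt_pow 3 x
    have h4 := hasDerivAt_pow 4 x
    convert (((h1.const_mul k0).add (h2.const_mul (k1/2))).add
      (h3.const_mul (k2/3))).add (h4.const_mul (k3/4)) using 1
    · rfl
    · rfl
    · rfl
    push_cast
    ring
  rw [intervalIntegral.integral_eq_sub_of_hasDerivAt h
    (by apply Continuous.intervalIntegrable; continuity)]
  ring

lemma measurableSet_Tset : MeasurableSet Tset := by
  have h1 : IsClosed {p : ℝ × ℝ | 0 ≤ p.1} := isClosed_le continuous_const continuous_fst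
  have h2 : IsClosed {p : ℝ × ℝ | 0 ≤ p.2} := isClosed_le continuous_const continuous_snd
  have h3 : IsClosed {p : ℝ × ℝ | p.1 + p.2 ≤ 1} :=
    isClosed_le (continuous_fst.add continuous_snd) continuous_const
  exact (h1.inter (h2.inter h3)).measurableSet

lemma isCompact_Tset : IsCompact Tset := by
  have hcl : IsClosed Tset := by
    have h1 : IsClosed {p : ℝ × ℝ | 0 ≤ p.1} := isClosed_le continuous_const continuous_fst
    have h2 : IsClosed {p : ℝ × ℝ | 0 ≤ p.2} := isClosed_le continuous_const continuous_snd
    have h3 : IsClosed {p : ℝ × ℝ | p.1 + p.2 ≤ 1} :=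
      isClosed_le (continuous_fst.add continuous_snd) continuous_const
    exact h1.inter (h2.inter h3)
  apply IsCompact.of_isClosed_subset (isCompact_Icc (a := ((0:ℝ),(0:ℝ))) (b := (1,1))) hcl
  rintro ⟨x, y⟩ ⟨h1, h2, h3⟩
  simp only [Set.mem_Icc, Prod.le_def] at *
  refine ⟨⟨h1, h2⟩, ⟨by linarith, by linarith⟩⟩

lemma Tset_integral (f : ℝ × ℝ → ℝ) (hf : Continuous f) :
    ∫ p in Tset, f p = ∫ s in (0:ℝ)..1, ∫ t in (0:ℝ)..(1-s), f (s, t) := by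
  have hm := measurableSet_Tset
  have hint : IntegrableOn f Tset := hf.continuousOn.integrableOn_compact isCompact_Tset
  rw [← integral_indicator hm]
  have hint2 : Integrable (Tset.indicator f) := (integrable_indicator_iff hm).2 hint
  rw [Measure.volume_eq_prod] at hint2 ⊢
  rw [integral_prod _ hint2]
  have key : ∀ s : ℝ, (∫ t, Tset.indicator f (s, t)) =
      (Set.Icc (0:ℝ) 1).indicator (fun s => ∫ t in (0:ℝ)..(1-s), f (s, t)) s := by
    intro s
    by_cases hs : s ∈ Set.Icc (0:ℝ) 1
    · rw [Set.indicator_of_mem hs]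
      obtain ⟨hs0, hs1⟩ := hs
      have hpt : ∀ t : ℝ, Tset.indicator f (s, t)
          = (Set.Icc (0:ℝ) (1-s)).indicator (fun t => f (s, t)) t := by
        intro t
        by_cases ht : t ∈ Set.Icc (0:ℝ) (1-s)
        · rw [Set.indicator_of_mem ht, Set.indicator_of_mem]
          exact ⟨hs0, ht.1, by have := ht.2; simp only [Set.mem_Icc] at *; linarith⟩
        · rw [Set.indicator_of_notMem ht, Set.indicator_of_notMem]
          intro hmem
          exact ht ⟨hmem.2.1, by have := hmem.2.2; linarith⟩
      simp_rw [hpt]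
      rw [integral_indicator measurableSet_Icc, integral_Icc_eq_integral_Ioc,
        ← intervalIntegral.integral_of_le (by linarith)]
    · rw [Set.indicator_of_notMem hs]
      have hpt : ∀ t : ℝ, Tset.indicator f (s, t) = 0 := by
        intro t
        rw [Set.indicator_of_notMem]
        rintro ⟨h1, h2, h3⟩
        exact hs ⟨h1, by linarith⟩
      simp_rw [hpt]
      simp
  simp_rw [key]
  rw [integral_indicator measurableSet_Icc, integral_Icc_eq_integral_Ioc,
    ← intervalIntegral.integral_of_le zero_le_one]

lemma Tset_moments (c0 c1 c2 c3 c4 c5 : ℝ) :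
    ∫ p in Tset, (c0 + c1 * p.1 + c2 * p.2 + c3 * p.1^2 + c4 * (p.1 * p.2) + c5 * p.2^2) =
      c0/2 + c1/6 + c2/6 + c3/12 + c4/24 + c5/12 := by
  rw [Tset_integral _ (by fun_prop)]
  have h1 : ∀ s : ℝ,
      (∫ t in (0:ℝ)..(1-s), (c0 + c1 * s + c2 * t + c3 * s^2 + c4 * (s*t) + c5 * t^2))
      = (c0 + c1*s + c3*s^2)*(1-s) + (c2 + c4*s)*((1-s)^2)/2 + c5*((1-s)^3)/3 := by
    intro s
    calc (∫ t in (0:ℝ)..(1-s), (c0 + c1 * s + c2 * t + c3 * s^2 + c4 * (s*t) + c5 * t^2))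
        = ∫ t in (0:ℝ)..(1-s),
            ((c0 + c1*s + c3*s^2) + (c2 + c4*s)*t + c5*t^2 + 0*t^3) := by
          apply intervalIntegral.integral_congr
          intro t _
          ring
      _ = (c0 + c1*s + c3*s^2)*(1-s) + (c2 + c4*s)*((1-s)^2)/2 + c5*((1-s)^3)/3 := by
          rw [poly_int]; ring
  simp_rw [h1]
  calc (∫ s in (0:ℝ)..1,
        ((c0 + c1*s + c3*s^2)*(1-s) + (c2 + c4*s)*((1-s)^2)/2 + c5*((1-s)^3)/3))
      = ∫ s in (0:ℝ)..1, ((c0 + c2/2 + c5/3) + (c1 - c0 + c4/2 - c2 - c5)*s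
          + (c3 - c1 + c2/2 - c4 + c5)*s^2 + (-c3 + c4/2 - c5/3)*s^3) := by
        apply intervalIntegral.integral_congr
        intro s _
        ring
    _ = c0/2 + c1/6 + c2/6 + c3/12 + c4/24 + c5/12 := by
        rw [poly_int]; ring

def eT : EuclideanSpace ℝ (Fin 2) ≃ᵐ ℝ × ℝ :=
  (MeasurableEquiv.toLp 2 (Fin 2 → ℝ)).symm.trans MeasurableEquiv.finTwoArrow

lemma eT_apply (x : EuclideanSpace ℝ (Fin 2)) : eT x = (x 0, x 1) := rfl

lemma eT_mp : MeasurePreserving eT := by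
  exact (volume_preserving_finTwoArrow ℝ).comp
    (EuclideanSpace.volume_preserving_symm_measurableEquiv_toLp (Fin 2))

lemma TE_preimage : TE = eT ⁻¹' Tset := rfl

lemma measurableSet_TE : MeasurableSet TE := by
  rw [TE_preimage]; exact eT.measurable measurableSet_Tset

lemma TE_moments (c0 c1 c2 c3 c4 c5 : ℝ) :
    ∫ x in TE, (c0 + c1 * x 0 + c2 * x 1 + c3 * (x 0)^2 + c4 * (x 0 * x 1) + c5 * (x 1)^2) =
      c0/2 + c1/6 + c2/6 + c3/12 + c4/24 + c5/12 := by
  have h := eT_mp.setIntegral_preimage_emb eT.measurableEmbedding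
    (fun p : ℝ × ℝ => c0 + c1 * p.1 + c2 * p.2 + c3 * p.1^2 + c4 * (p.1 * p.2) + c5 * p.2^2)
    Tset
  rw [TE_preimage]
  rw [show (fun x : EuclideanSpace ℝ (Fin 2) =>
      c0 + c1 * x 0 + c2 * x 1 + c3 * (x 0)^2 + c4 * (x 0 * x 1) + c5 * (x 1)^2)
    = fun x : EuclideanSpace ℝ (Fin 2) =>
      (fun p : ℝ × ℝ => c0 + c1 * p.1 + c2 * p.2 + c3 * p.1^2 + c4 * (p.1 * p.2) + c5 * p.2^2)
        (eT x) from rfl]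
  rw [h]
  exact Tset_moments c0 c1 c2 c3 c4 c5

lemma convex_TE : Convex ℝ TE := by
  intro x hx y hy a b ha hb hab
  obtain ⟨hx0, hx1, hx2⟩ := hx
  obtain ⟨hy0, hy1, hy2⟩ := hy
  have h0 : (a • x + b • y) 0 = a * x 0 + b * y 0 := rfl
  have h1 : (a • x + b • y) 1 = a * x 1 + b * y 1 := rfl
  refine ⟨?_, ?_, ?_⟩
  · rw [h0]; exact add_nonneg (mul_nonneg ha hx0) (mul_nonneg hb hy0)
  · rw [h1]; exact add_nonneg (mul_nonneg ha hx1) (mul_nonneg hb hy1)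
  · rw [h0, h1]
    nlinarith [mul_le_mul_of_nonneg_left hx2 ha, mul_le_mul_of_nonneg_left hy2 hb]

def Mlin (u v : E2) : E2 →ₗ[ℝ] E2 where
  toFun y := y 0 • u + y 1 • v
  map_add' x y := by
    show ((x + y) 0) • u + ((x + y) 1) • v = (x 0 • u + x 1 • v) + (y 0 • u + y 1 • v)
    rw [show (x + y) 0 = x 0 + y 0 from rfl, show (x + y) 1 = x 1 + y 1 from rfl]
    module
  map_smul' c x := by
    show ((c • x) 0) • u + ((c • x) 1) • v = c • (x 0 • u + x 1 • v)
    rw [show (c • x) 0 = c * x 0 from rfl, show (c • x) 1 = c * x 1 from rfl]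
    module

def Lmap (P u v : E2) : E2 → E2 := fun y => P + (y 0 • u + y 1 • v)

lemma hull_eq_image (P u v : E2) :
    convexHull ℝ {P, P + u, P + v} = Lmap P u v '' TE := by
  apply Set.Subset.antisymm
  · apply convexHull_min
    · refine Set.insert_subset_iff.2 ⟨?_, Set.insert_subset_iff.2 ⟨?_,
        Set.singleton_subset_iff.2 ?_⟩⟩
      · refine ⟨0, ⟨le_refl _, le_refl _, by norm_num⟩, ?_⟩
        show P + ((0:ℝ) • u + (0:ℝ) • v) = P
        simp
      · refine ⟨EuclideanSpace.single 0 1, ?_, ?_⟩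
        · refine ⟨?_, ?_, ?_⟩ <;> simp [EuclideanSpace.single_apply]
        · show P + ((EuclideanSpace.single (0:Fin 2) (1:ℝ)) 0 • u
            + (EuclideanSpace.single (0:Fin 2) (1:ℝ)) 1 • v) = P + u
          simp [EuclideanSpace.single_apply]
      · refine ⟨EuclideanSpace.single 1 1, ?_, ?_⟩
        · refine ⟨?_, ?_, ?_⟩ <;> simp [EuclideanSpace.single_apply]
        · show P + ((EuclideanSpace.single (1:Fin 2) (1:ℝ)) 0 • u
            + (EuclideanSpace.single (1:Fin 2) (1:ℝ)) 1 • v) = P + v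
          simp [EuclideanSpace.single_apply]
    · have himg : Lmap P u v '' TE = (fun z => P + z) '' ((Mlin u v) '' TE) := by
        rw [← Set.image_comp]; rfl
      rw [himg]
      exact (convex_TE.linear_image (Mlin u v)).translate P
  · rintro _ ⟨y, ⟨hy0, hy1, hy2⟩, rfl⟩
    have hsum1 : ∑ i, (![1 - y 0 - y 1, y 0, y 1]) i = 1 := by
      simp [Fin.sum_univ_three]; ring
    have hw0 : ∀ i ∈ (Finset.univ : Finset (Fin 3)), 0 ≤ (![1 - y 0 - y 1, y 0, y 1]) i := by
      intro i _
      fin_cases i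
      · show (0:ℝ) ≤ 1 - y 0 - y 1; linarith
      · exact hy0
      · exact hy1
    have hz : ∀ i ∈ (Finset.univ : Finset (Fin 3)),
        (![P, P + u, P + v]) i ∈ ({P, P + u, P + v} : Set E2) := by
      intro i _
      fin_cases i
      · exact Set.mem_insert _ _
      · exact Set.mem_insert_of_mem _ (Set.mem_insert _ _)
      · exact Set.mem_insert_of_mem _ (Set.mem_insert_of_mem _ rfl)
    have hmem := Finset.centerMass_mem_convexHull (t := (Finset.univ : Finset (Fin 3)))
      (w := ![1 - y 0 - y 1, y 0, y 1]) (z := ![P, P + u, P + v])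
      (s := ({P, P + u, P + v} : Set E2)) hw0 (by rw [hsum1]; norm_num) hz
    rw [Finset.centerMass_eq_of_sum_1 _ _ hsum1] at hmem
    simp only [Fin.sum_univ_three, Matrix.cons_val_zero, Matrix.cons_val_one, Matrix.head_cons,
      Matrix.cons_val_two, Matrix.tail_cons] at hmem
    have heq : (1 - y 0 - y 1) • P + y 0 • (P + u) + y 1 • (P + v) = Lmap P u v y := by
      show _ = P + (y 0 • u + y 1 • v)
      module
    rw [← heq]
    exact hmem

lemma Mlin_det (u v : E2) : LinearMap.det (Mlin u v) = u 0 * v 1 - u 1 * v 0 := by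
  have hb := LinearMap.det_toMatrix ((EuclideanSpace.basisFun (Fin 2) ℝ).toBasis) (Mlin u v)
  rw [← hb, Matrix.det_fin_two]
  have happ : ∀ (j i : Fin 2),
      LinearMap.toMatrix ((EuclideanSpace.basisFun (Fin 2) ℝ).toBasis)
        ((EuclideanSpace.basisFun (Fin 2) ℝ).toBasis) (Mlin u v) i j
      = (Mlin u v ((EuclideanSpace.basisFun (Fin 2) ℝ).toBasis j)) i := by
    intro j i
    rw [LinearMap.toMatrix_apply]
    rfl
  rw [happ, happ, happ, happ]
  have h0 : (EuclideanSpace.basisFun (Fin 2) ℝ).toBasis (0 : Fin 2)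
      = EuclideanSpace.single 0 1 := by
    rw [OrthonormalBasis.coe_toBasis, EuclideanSpace.basisFun_apply]
  have h1 : (EuclideanSpace.basisFun (Fin 2) ℝ).toBasis (1 : Fin 2)
      = EuclideanSpace.single 1 1 := by
    rw [OrthonormalBasis.coe_toBasis, EuclideanSpace.basisFun_apply]
  rw [h0, h1]
  have hu : Mlin u v (EuclideanSpace.single 0 1) = u := by
    show (EuclideanSpace.single (0:Fin 2) (1:ℝ)) 0 • u
      + (EuclideanSpace.single (0:Fin 2) (1:ℝ)) 1 • v = u
    simp [EuclideanSpace.single_apply]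
  have hv : Mlin u v (EuclideanSpace.single 1 1) = v := by
    show (EuclideanSpace.single (1:Fin 2) (1:ℝ)) 0 • u
      + (EuclideanSpace.single (1:Fin 2) (1:ℝ)) 1 • v = v
    simp [EuclideanSpace.single_apply]
  rw [hu, hv]
  ring

lemma CoV (P u v : E2) (hd : u 0 * v 1 - u 1 * v 0 ≠ 0) (g : E2 → ℝ) :
    ∫ x in convexHull ℝ {P, P + u, P + v}, g x
      = |u 0 * v 1 - u 1 * v 0| * ∫ y in TE, g (P + (y 0 • u + y 1 • v)) := by
  rw [hull_eq_image]
  set Mc : E2 →L[ℝ] E2 := LinearMap.toContinuousLinearMap (Mlin u v) with hMc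
  have hder : ∀ x ∈ TE, HasFDerivWithinAt (Lmap P u v) Mc TE x := by
    intro x _
    have h1 : HasFDerivAt (fun y : E2 => P + Mc y) Mc x := (Mc.hasFDerivAt).const_add P
    have h2 : (fun y : E2 => P + Mc y) = Lmap P u v := rfl
    rw [h2] at h1
    exact h1.hasFDerivWithinAt
  have hdet : Mc.det = u 0 * v 1 - u 1 * v 0 := by
    have hcoe : (Mc : E2 →ₗ[ℝ] E2) = Mlin u v := LinearMap.coe_toContinuousLinearMap _
    rw [show Mc.det = LinearMap.det (Mc : E2 →ₗ[ℝ] E2) from rfl, hcoe, Mlin_det]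
  have hinj : Set.InjOn (Lmap P u v) TE := by
    intro x _ y _ h
    have h0 : x 0 • u + x 1 • v = y 0 • u + y 1 • v := by
      have := h
      simp only [Lmap] at this
      exact add_left_cancel this
    have hco : ∀ i : Fin 2, x 0 * u i + x 1 * v i = y 0 * u i + y 1 * v i := by
      intro i
      have := congrArg (fun z : E2 => z i) h0
      simpa [PiLp.add_apply, PiLp.smul_apply, smul_eq_mul] using this
    have e0 := hco 0
    have e1 := hco 1
    have hx0 : x 0 = y 0 := by
      have hz : (x 0 - y 0) * (u 0 * v 1 - u 1 * v 0) = 0 := by linear_combination e0 * v 1 - e1 * v 0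
      rcases mul_eq_zero.1 hz with h' | h'
      · linarith [sub_eq_zero.1 h']
      · exact absurd h' hd
    have hx1 : x 1 = y 1 := by
      have hz : (x 1 - y 1) * (u 0 * v 1 - u 1 * v 0) = 0 := by linear_combination e1 * u 0 - e0 * u 1
      rcases mul_eq_zero.1 hz with h' | h'
      · linarith [sub_eq_zero.1 h']
      · exact absurd h' hd
    ext i
    fin_cases i
    · exact hx0
    · exact hx1
  rw [integral_image_eq_integral_abs_det_fderiv_smul volume measurableSet_TE hder hinj g]
  simp only [hdet, smul_eq_mul]
  rw [integral_const_mul]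
  rfl

lemma master (P u v : E2) (hd : u 0 * v 1 - u 1 * v 0 ≠ 0) (P₀ Q₀ : E2) :
    ∫ x in convexHull ℝ {P, P + u, P + v}, ⟪x - P₀, x - Q₀⟫
      = |u 0 * v 1 - u 1 * v 0| *
        (⟪P - P₀, P - Q₀⟫ / 2
          + (⟪P - P₀, u⟫ + ⟪u, P - Q₀⟫ + ⟪P - P₀, v⟫ + ⟪v, P - Q₀⟫) / 6
          + ⟪u, u⟫ / 12 + ⟪u, v⟫ / 12 + ⟪v, v⟫ / 12) := by
  rw [CoV P u v hd (fun x => ⟪x - P₀, x - Q₀⟫)]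
  congr 1
  have hfun : ∀ y : E2, ⟪(P + (y 0 • u + y 1 • v)) - P₀, (P + (y 0 • u + y 1 • v)) - Q₀⟫
      = ⟪P - P₀, P - Q₀⟫ + (⟪P - P₀, u⟫ + ⟪u, P - Q₀⟫) * y 0
        + (⟪P - P₀, v⟫ + ⟪v, P - Q₀⟫) * y 1
        + ⟪u, u⟫ * (y 0)^2 + (2 * ⟪u, v⟫) * (y 0 * y 1) + ⟪v, v⟫ * (y 1)^2 := by
    intro y
    have h1 : (P + (y 0 • u + y 1 • v)) - P₀ = (P - P₀) + (y 0 • u + y 1 • v) := by abel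
    have h2 : (P + (y 0 • u + y 1 • v)) - Q₀ = (P - Q₀) + (y 0 • u + y 1 • v) := by abel
    rw [h1, h2]
    simp only [inner_add_left, inner_add_right, real_inner_smul_left, real_inner_smul_right]
    rw [real_inner_comm v u]
    ring
  calc ∫ y in TE, ⟪(P + (y 0 • u + y 1 • v)) - P₀, (P + (y 0 • u + y 1 • v)) - Q₀⟫
      = ∫ y in TE, (⟪P - P₀, P - Q₀⟫ + (⟪P - P₀, u⟫ + ⟪u, P - Q₀⟫) * y 0
        + (⟪P - P₀, v⟫ + ⟪v, P - Q₀⟫) * y 1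
        + ⟪u, u⟫ * (y 0)^2 + (2 * ⟪u, v⟫) * (y 0 * y 1) + ⟪v, v⟫ * (y 1)^2) := by
        exact setIntegral_congr_fun measurableSet_TE (fun y _ => hfun y)
    _ = _ := by
        have := TE_moments (⟪P - P₀, P - Q₀⟫) (⟪P - P₀, u⟫ + ⟪u, P - Q₀⟫)
          (⟪P - P₀, v⟫ + ⟪v, P - Q₀⟫) (⟪u, u⟫) (2 * ⟪u, v⟫) (⟪v, v⟫)
        calc ∫ y in TE, (⟪P - P₀, P - Q₀⟫ + (⟪P - P₀, u⟫ + ⟪u, P - Q₀⟫) * y 0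
              + (⟪P - P₀, v⟫ + ⟪v, P - Q₀⟫) * y 1
              + ⟪u, u⟫ * (y 0)^2 + (2 * ⟪u, v⟫) * (y 0 * y 1) + ⟪v, v⟫ * (y 1)^2)
            = ∫ y in TE, (⟪P - P₀, P - Q₀⟫ + (⟪P - P₀, u⟫ + ⟪u, P - Q₀⟫) * y 0
              + (⟪P - P₀, v⟫ + ⟪v, P - Q₀⟫) * y 1
              + ⟪u, u⟫ * (y 0)^2 + (2 * ⟪u, v⟫) * (y 0 * y 1) + ⟪v, v⟫ * (y 1)^2) := rfl
          _ = _ := by rw [this]; ring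

lemma area_hull (P u v : E2) (hd : u 0 * v 1 - u 1 * v 0 ≠ 0) :
    (volume (convexHull ℝ {P, P + u, P + v})).toReal = |u 0 * v 1 - u 1 * v 0| / 2 := by
  have h1 := CoV P u v hd (fun _ => (1:ℝ))
  have h2 : ∫ y in TE, (1:ℝ) = 1/2 := by
    have := TE_moments 1 0 0 0 0 0
    simpa using this
  have h3 : ∫ x in convexHull ℝ {P, P + u, P + v}, (1:ℝ)
      = (volume (convexHull ℝ {P, P + u, P + v})).toReal := by
    rw [setIntegral_const]
    simp
    rfl
  rw [h3, h2] at h1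
  rw [h1]
  ring

lemma cot_eq (u v : E2) (hd : u 0 * v 1 - u 1 * v 0 ≠ 0) :
    cos (InnerProductGeometry.angle u v) / sin (InnerProductGeometry.angle u v)
      = ⟪u, v⟫ / |u 0 * v 1 - u 1 * v 0| := by
  have hcoord : ∀ x y : E2, ⟪x, y⟫ = x 0 * y 0 + x 1 * y 1 := by
    intro x y
    rw [PiLp.inner_apply]
    simp [Fin.sum_univ_two, RCLike.inner_apply, mul_comm]
  have hu : u ≠ 0 := by
    intro h
    apply hd
    rw [h]
    simp
  have hv : v ≠ 0 := by
    intro h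
    apply hd
    rw [h]
    simp
  have hnu : (0:ℝ) < ‖u‖ := norm_pos_iff.2 hu
  have hnv : (0:ℝ) < ‖v‖ := norm_pos_iff.2 hv
  have hsin := InnerProductGeometry.sin_angle_mul_norm_mul_norm u v
  have hlagrange : ⟪u, u⟫ * ⟪v, v⟫ - ⟪u, v⟫ * ⟪u, v⟫
      = (u 0 * v 1 - u 1 * v 0)^2 := by
    rw [hcoord, hcoord, hcoord]
    ring
  rw [hlagrange, Real.sqrt_sq_eq_abs] at hsin
  have hcos := InnerProductGeometry.cos_angle u v
  have habs : (0:ℝ) < |u 0 * v 1 - u 1 * v 0| := abs_pos.2 hd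
  have hsinpos : 0 < sin (InnerProductGeometry.angle u v) := by
    have h' : sin (InnerProductGeometry.angle u v) = |u 0 * v 1 - u 1 * v 0| / (‖u‖ * ‖v‖) := by
      field_simp at hsin ⊢
      linarith [hsin]
    rw [h']
    positivity
  have h' : sin (InnerProductGeometry.angle u v) = |u 0 * v 1 - u 1 * v 0| / (‖u‖ * ‖v‖) := by
    field_simp at hsin ⊢
    linarith [hsin]
  rw [hcos, h']
  field_simp

lemma entry_diag (P Q R : E2) (K : Set (EuclideanSpace ℝ (Fin 2))) (A ρsq : ℝ) (G : E2)
    (hd : (Q - P) 0 * (R - P) 1 - (Q - P) 1 * (R - P) 0 ≠ 0)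
    (hK : K = convexHull ℝ {P, Q, R})
    (hA : A = |(Q - P) 0 * (R - P) 1 - (Q - P) 1 * (R - P) 0| / 2)
    (hG : G = (3:ℝ)⁻¹ • (P + Q + R))
    (hρ : ρsq = (1 / A) * ∫ x in K, ‖x - G‖ ^ 2) :
    (∫ x in K, ‖(2 * A)⁻¹ • (x - P)‖ ^ 2)
      = 1/6 * (cos (InnerProductGeometry.angle (Q - P) (R - P))
          / sin (InnerProductGeometry.angle (Q - P) (R - P))) + 3/4 * (ρsq / A) := by
  set u := Q - P with hu
  set v := R - P with hv
  have hQm : Q = P + u := by rw [hu]; abel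
  have hRm : R = P + v := by rw [hv]; abel
  have hK' : K = convexHull ℝ {P, P + u, P + v} := by rw [hK, hQm, hRm]
  have habs0 : (0:ℝ) < |u 0 * v 1 - u 1 * v 0| := abs_pos.2 hd
  have hApos : 0 < A := by rw [hA]; positivity
  have habs : |u 0 * v 1 - u 1 * v 0| = 2 * A := by rw [hA]; ring
  -- value of ρsq
  have hPG : P - G = -((3:ℝ)⁻¹) • (u + v) := by rw [hG, hu, hv]; module
  have hρ2 : ρsq = (1 / A) * ∫ x in K, ⟪x - G, x - G⟫ := by
    rw [hρ]
    congr 1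
    simp_rw [real_inner_self_eq_norm_sq]
  rw [hK', master P u v hd G G, hPG] at hρ2
  simp only [inner_neg_left, inner_neg_right, inner_smul_left, inner_smul_right,
    inner_add_left, inner_add_right, conj_trivial] at hρ2
  rw [real_inner_comm v u] at hρ2
  rw [habs] at hρ2
  -- main integral
  have hsm : ∀ x : E2, ‖(2 * A)⁻¹ • (x - P)‖ ^ 2 = ((2*A)⁻¹)^2 * ⟪x - P, x - P⟫ := by
    intro x
    rw [norm_smul, mul_pow, Real.norm_eq_abs, abs_of_pos (by positivity : (0:ℝ) < (2*A)⁻¹),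
      ← real_inner_self_eq_norm_sq]
  simp_rw [hsm]
  rw [integral_const_mul, hK', master P u v hd P P, sub_self]
  simp only [inner_zero_left, inner_zero_right]
  rw [habs, cot_eq u v hd, habs, hρ2]
  rw [real_inner_comm v u]
  field_simp
  ring

lemma entry_off (P Q R : E2) (K : Set (EuclideanSpace ℝ (Fin 2))) (A ρsq : ℝ) (G : E2)
    (hd : (Q - P) 0 * (R - P) 1 - (Q - P) 1 * (R - P) 0 ≠ 0)
    (hK : K = convexHull ℝ {P, Q, R})
    (hA : A = |(Q - P) 0 * (R - P) 1 - (Q - P) 1 * (R - P) 0| / 2)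
    (hG : G = (3:ℝ)⁻¹ • (P + Q + R))
    (hρ : ρsq = (1 / A) * ∫ x in K, ‖x - G‖ ^ 2) :
    (∫ x in K, ⟪(2 * A)⁻¹ • (x - Q), (2 * A)⁻¹ • (x - R)⟫)
      = 1/6 * (cos (InnerProductGeometry.angle (Q - P) (R - P))
          / sin (InnerProductGeometry.angle (Q - P) (R - P))) - 3/4 * (ρsq / A) := by
  set u := Q - P with hu
  set v := R - P with hv
  have hQm : Q = P + u := by rw [hu]; abel
  have hRm : R = P + v := by rw [hv]; abel
  have hK' : K = convexHull ℝ {P, P + u, P + v} := by rw [hK, hQm, hRm]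
  have habs0 : (0:ℝ) < |u 0 * v 1 - u 1 * v 0| := abs_pos.2 hd
  have hApos : 0 < A := by rw [hA]; positivity
  have habs : |u 0 * v 1 - u 1 * v 0| = 2 * A := by rw [hA]; ring
  have hPG : P - G = -((3:ℝ)⁻¹) • (u + v) := by rw [hG, hu, hv]; module
  have hρ2 : ρsq = (1 / A) * ∫ x in K, ⟪x - G, x - G⟫ := by
    rw [hρ]
    congr 1
    simp_rw [real_inner_self_eq_norm_sq]
  rw [hK', master P u v hd G G, hPG] at hρ2
  simp only [inner_neg_left, inner_neg_right, inner_smul_left, inner_smul_right,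
    inner_add_left, inner_add_right, conj_trivial] at hρ2
  rw [real_inner_comm v u] at hρ2
  rw [habs] at hρ2
  have hPQ : P - Q = -u := by rw [hu]; abel
  have hPR : P - R = -v := by rw [hv]; abel
  have hsm : ∀ x : E2, ⟪(2 * A)⁻¹ • (x - Q), (2 * A)⁻¹ • (x - R)⟫
      = ((2*A)⁻¹)^2 * ⟪x - Q, x - R⟫ := by
    intro x
    rw [real_inner_smul_left, real_inner_smul_right]
    ring
  simp_rw [hsm]
  rw [integral_const_mul, hK', master P u v hd Q R, hPQ, hPR]
  simp only [inner_neg_left, inner_neg_right]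
  rw [habs, cot_eq u v hd, habs, hρ2]
  rw [real_inner_comm v u]
  field_simp
  ring

/-- For a nondegenerate triangle `K` in `ℝ²` with interior angles
`θ₁, θ₂, θ₃` and Raviart–Thomas basis functions `φᵢ(x) = (x − Wᵢ)/(2|K|)`, the entries of
the local mass matrix satisfy `∫_K ‖φᵢ‖² = (1/6) cot θᵢ + (3/4) ρ_K²/|K|` and, for
`i ≠ j` with remaining index `k`, `∫_K φᵢ·φⱼ = (1/6) cot θ_k − (3/4) ρ_K²/|K|`. -/
theorem stmt_5
    (W : Fin 3 → EuclideanSpace ℝ (Fin 2)) (hW : AffineIndependent ℝ W)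
    (K : Set (EuclideanSpace ℝ (Fin 2))) (hK : K = convexHull ℝ (Set.range W))
    (A : ℝ) (hA : A = (volume K).toReal)
    (G : EuclideanSpace ℝ (Fin 2)) (hG : G = (3 : ℝ)⁻¹ • (W 0 + W 1 + W 2))
    (ρsq : ℝ) (hρ : ρsq = (1 / A) * ∫ x in K, ‖x - G‖ ^ 2)
    (θ : Fin 3 → ℝ)
    (hθ : ∀ i : Fin 3, θ i = EuclideanGeometry.angle (W (i + 1)) (W i) (W (i + 2)))
    (φ : Fin 3 → EuclideanSpace ℝ (Fin 2) → EuclideanSpace ℝ (Fin 2))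
    (hφ : ∀ i x, φ i x = (2 * A)⁻¹ • (x - W i)) :
    (∀ i : Fin 3,
        (∫ x in K, ‖φ i x‖ ^ 2) = (1 / 6) * (cos (θ i) / sin (θ i)) + (3 / 4) * (ρsq / A)) ∧
      (∀ i j k : Fin 3, i ≠ j → j ≠ k → i ≠ k →
        (∫ x in K, ⟪φ i x, φ j x⟫) =
          (1 / 6) * (cos (θ k) / sin (θ k)) - (3 / 4) * (ρsq / A)) := by
  have hrange : Set.range W = {W 0, W 1, W 2} := by
    ext x
    constructor
    · rintro ⟨i, rfl⟩
      fin_cases i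
      · exact Set.mem_insert _ _
      · exact Set.mem_insert_of_mem _ (Set.mem_insert _ _)
      · exact Set.mem_insert_of_mem _ (Set.mem_insert_of_mem _ rfl)
    · rintro (rfl | rfl | rfl)
      · exact ⟨0, rfl⟩
      · exact ⟨1, rfl⟩
      · exact ⟨2, rfl⟩
  set d0 := (W 1 - W 0) 0 * (W 2 - W 0) 1 - (W 1 - W 0) 1 * (W 2 - W 0) 0 with hd0def
  have hd0 : d0 ≠ 0 := by
    intro hzero
    rw [hd0def] at hzero
    have key : ∃ a b : ℝ, (a ≠ 0 ∨ b ≠ 0) ∧ a • (W 1 - W 0) + b • (W 2 - W 0) = 0 := by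
      by_cases hc : (W 1 - W 0) 0 = 0 ∧ (W 2 - W 0) 0 = 0
      · by_cases hc2 : (W 1 - W 0) 1 = 0 ∧ (W 2 - W 0) 1 = 0
        · refine ⟨1, 0, Or.inl one_ne_zero, ?_⟩
          ext i
          fin_cases i
          · show (1:ℝ) * (W 1 - W 0) 0 + (0:ℝ) * (W 2 - W 0) 0 = 0
            linear_combination hc.1
          · show (1:ℝ) * (W 1 - W 0) 1 + (0:ℝ) * (W 2 - W 0) 1 = 0
            linear_combination hc2.1
        · refine ⟨(W 2 - W 0) 1, -((W 1 - W 0) 1), ?_, ?_⟩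
          · by_cases h1 : (W 1 - W 0) 1 = 0
            · left
              intro h2
              exact hc2 ⟨h1, h2⟩
            · right
              exact neg_ne_zero.2 h1
          · ext i
            fin_cases i
            · show (W 2 - W 0) 1 * (W 1 - W 0) 0 + (-((W 1 - W 0) 1)) * (W 2 - W 0) 0 = 0
              linear_combination (W 2 - W 0) 1 * hc.1 - (W 1 - W 0) 1 * hc.2
            · show (W 2 - W 0) 1 * (W 1 - W 0) 1 + (-((W 1 - W 0) 1)) * (W 2 - W 0) 1 = 0
              ring
      · refine ⟨(W 2 - W 0) 0, -((W 1 - W 0) 0), ?_, ?_⟩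
        · by_cases h1 : (W 1 - W 0) 0 = 0
          · left
            intro h2
            exact hc ⟨h1, h2⟩
          · right
            exact neg_ne_zero.2 h1
        · ext i
          fin_cases i
          · show (W 2 - W 0) 0 * (W 1 - W 0) 0 + (-((W 1 - W 0) 0)) * (W 2 - W 0) 0 = 0
            ring
          · show (W 2 - W 0) 0 * (W 1 - W 0) 1 + (-((W 1 - W 0) 0)) * (W 2 - W 0) 1 = 0
            linear_combination -hzero
    obtain ⟨a, b, hab, hcomb⟩ := key
    have h3 := affineIndependent_iff.1 hW Finset.univ ![-(a+b), a, b]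
      (by simp [Fin.sum_univ_three])
      (by
        rw [Fin.sum_univ_three]
        simp only [Matrix.cons_val_zero, Matrix.cons_val_one, Matrix.head_cons,
          Matrix.cons_val_two, Matrix.tail_cons]
        have hrw : (-(a+b)) • W 0 + a • W 1 + b • W 2
            = a • (W 1 - W 0) + b • (W 2 - W 0) := by module
        rw [hrw, hcomb])
    rcases hab with ha | hb
    · have := h3 1 (Finset.mem_univ _)
      simp at this
      exact ha this
    · have := h3 2 (Finset.mem_univ _)
      simp at this
      exact hb this
  have harea := area_hull (W 0) (W 1 - W 0) (W 2 - W 0) (by rw [← hd0def]; exact hd0)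
  rw [show W 0 + (W 1 - W 0) = W 1 from by abel,
    show W 0 + (W 2 - W 0) = W 2 from by abel] at harea
  have hA2 : A = |d0| / 2 := by
    rw [hA, hK, hrange, harea, ← hd0def]
  -- per-case determinant identities
  have hdet1 : (W 2 - W 1) 0 * (W 0 - W 1) 1 - (W 2 - W 1) 1 * (W 0 - W 1) 0 = d0 := by
    rw [hd0def]
    simp only [PiLp.sub_apply]
    ring
  have hdet2 : (W 0 - W 2) 0 * (W 1 - W 2) 1 - (W 0 - W 2) 1 * (W 1 - W 2) 0 = d0 := by
    rw [hd0def]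
    simp only [PiLp.sub_apply]
    ring
  have hs1 : ({W 1, W 2, W 0} : Set (EuclideanSpace ℝ (Fin 2))) = {W 0, W 1, W 2} := by
    ext x; simp; tauto
  have hs2 : ({W 2, W 0, W 1} : Set (EuclideanSpace ℝ (Fin 2))) = {W 0, W 1, W 2} := by
    ext x; simp; tauto
  have hK0 : K = convexHull ℝ {W 0, W 1, W 2} := by rw [hK, hrange]
  have hK1 : K = convexHull ℝ {W 1, W 2, W 0} := by rw [hK0, hs1]
  have hK2 : K = convexHull ℝ {W 2, W 0, W 1} := by rw [hK0, hs2]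
  have hG1 : G = (3:ℝ)⁻¹ • (W 1 + W 2 + W 0) := by rw [hG]; module
  have hG2 : G = (3:ℝ)⁻¹ • (W 2 + W 0 + W 1) := by rw [hG]; module
  have hA0 : A = |(W 1 - W 0) 0 * (W 2 - W 0) 1 - (W 1 - W 0) 1 * (W 2 - W 0) 0| / 2 := by
    rw [← hd0def]; exact hA2
  have hA1 : A = |(W 2 - W 1) 0 * (W 0 - W 1) 1 - (W 2 - W 1) 1 * (W 0 - W 1) 0| / 2 := by
    rw [hdet1]; exact hA2
  have hA1' : (W 2 - W 1) 0 * (W 0 - W 1) 1 - (W 2 - W 1) 1 * (W 0 - W 1) 0 ≠ 0 := by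
    rw [hdet1]; exact hd0
  have hA2d : A = |(W 0 - W 2) 0 * (W 1 - W 2) 1 - (W 0 - W 2) 1 * (W 1 - W 2) 0| / 2 := by
    rw [hdet2]; exact hA2
  have hA2' : (W 0 - W 2) 0 * (W 1 - W 2) 1 - (W 0 - W 2) 1 * (W 1 - W 2) 0 ≠ 0 := by
    rw [hdet2]; exact hd0
  have hd0' : (W 1 - W 0) 0 * (W 2 - W 0) 1 - (W 1 - W 0) 1 * (W 2 - W 0) 0 ≠ 0 := by
    rw [← hd0def]; exact hd0
  have hθ' : ∀ i : Fin 3, θ i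
      = InnerProductGeometry.angle (W (i + 1) - W i) (W (i + 2) - W i) := by
    intro i
    rw [hθ i]
    rfl
  have e01 : ((0:Fin 3) + 1) = 1 := by decide
  have e02 : ((0:Fin 3) + 2) = 2 := by decide
  have e11 : ((1:Fin 3) + 1) = 2 := by decide
  have e12 : ((1:Fin 3) + 2) = 0 := by decide
  have e21 : ((2:Fin 3) + 1) = 0 := by decide
  have e22 : ((2:Fin 3) + 2) = 1 := by decide
  have hθ0 : θ 0 = InnerProductGeometry.angle (W 1 - W 0) (W 2 - W 0) := by
    rw [hθ' 0, e01, e02]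
  have hθ1 : θ 1 = InnerProductGeometry.angle (W 2 - W 1) (W 0 - W 1) := by
    rw [hθ' 1, e11, e12]
  have hθ2 : θ 2 = InnerProductGeometry.angle (W 0 - W 2) (W 1 - W 2) := by
    rw [hθ' 2, e21, e22]
  constructor
  · intro i
    have hi : i = 0 ∨ i = 1 ∨ i = 2 := by
      fin_cases i
      · exact Or.inl rfl
      · exact Or.inr (Or.inl rfl)
      · exact Or.inr (Or.inr rfl)
    rcases hi with rfl | rfl | rfl
    · simp only [hφ]
      rw [hθ0]
      exact entry_diag (W 0) (W 1) (W 2) K A ρsq G hd0' hK0 hA0 hG hρ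
    · simp only [hφ]
      rw [hθ1]
      exact entry_diag (W 1) (W 2) (W 0) K A ρsq G hA1' hK1 hA1 hG1 hρ
    · simp only [hφ]
      rw [hθ2]
      exact entry_diag (W 2) (W 0) (W 1) K A ρsq G hA2' hK2 hA2d hG2 hρ
  · intro i j k hij hjk hik
    have hi : i = 0 ∨ i = 1 ∨ i = 2 := by
      fin_cases i
      · exact Or.inl rfl
      · exact Or.inr (Or.inl rfl)
      · exact Or.inr (Or.inr rfl)
    have hj : j = 0 ∨ j = 1 ∨ j = 2 := by
      fin_cases j
      · exact Or.inl rfl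
      · exact Or.inr (Or.inl rfl)
      · exact Or.inr (Or.inr rfl)
    have hk : k = 0 ∨ k = 1 ∨ k = 2 := by
      fin_cases k
      · exact Or.inl rfl
      · exact Or.inr (Or.inl rfl)
      · exact Or.inr (Or.inr rfl)
    rcases hi with rfl | rfl | rfl <;> rcases hj with rfl | rfl | rfl <;>
      rcases hk with rfl | rfl | rfl <;>
      first
      | exact absurd rfl hij
      | exact absurd rfl hjk
      | exact absurd rfl hik
      | skip
    -- remaining 6 goals in order:
    -- (0,1,2), (0,2,1), (1,0,2), (1,2,0), (2,0,1), (2,1,0)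
    · simp only [hφ]
      rw [hθ2]
      exact entry_off (W 2) (W 0) (W 1) K A ρsq G hA2' hK2 hA2d hG2 hρ
    · simp only [hφ]
      rw [hθ1]
      have hsw : ∀ x : EuclideanSpace ℝ (Fin 2),
          ⟪(2 * A)⁻¹ • (x - W 0), (2 * A)⁻¹ • (x - W 2)⟫
            = ⟪(2 * A)⁻¹ • (x - W 2), (2 * A)⁻¹ • (x - W 0)⟫ := fun x =>
        real_inner_comm _ _
      simp only [hsw]
      exact entry_off (W 1) (W 2) (W 0) K A ρsq G hA1' hK1 hA1 hG1 hρ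
    · simp only [hφ]
      rw [hθ2]
      have hsw : ∀ x : EuclideanSpace ℝ (Fin 2),
          ⟪(2 * A)⁻¹ • (x - W 1), (2 * A)⁻¹ • (x - W 0)⟫
            = ⟪(2 * A)⁻¹ • (x - W 0), (2 * A)⁻¹ • (x - W 1)⟫ := fun x =>
        real_inner_comm _ _
      simp only [hsw]
      exact entry_off (W 2) (W 0) (W 1) K A ρsq G hA2' hK2 hA2d hG2 hρ
    · simp only [hφ]
      rw [hθ0]
      exact entry_off (W 0) (W 1) (W 2) K A ρsq G hd0' hK0 hA0 hG hρ
    · simp only [hφ]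
      rw [hθ1]
      exact entry_off (W 1) (W 2) (W 0) K A ρsq G hA1' hK1 hA1 hG1 hρ
    · simp only [hφ]
      rw [hθ0]
      have hsw : ∀ x : EuclideanSpace ℝ (Fin 2),
          ⟪(2 * A)⁻¹ • (x - W 2), (2 * A)⁻¹ • (x - W 1)⟫
            = ⟪(2 * A)⁻¹ • (x - W 1), (2 * A)⁻¹ • (x - W 2)⟫ := fun x =>
        real_inner_comm _ _
      simp only [hsw]
      exact entry_off (W 0) (W 1) (W 2) K A ρsq G hd0' hK0 hA0 hG hρ

end
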